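/- For the machine div2 the following input-output description holds. (i) ((b, 0), s) ↝ ((b′, 0), s) if and only if there exist j ∈ ℤ and α, β ∈ {0, 1} with b = 2j − α and b′ = 2j − β. (ii) ((b, 0), s) ↝ ((b′, 0), f) if and only if b = 2b′ or b = 2b′ − 1. (iii) ((b, 0), f) ↝ ((b′, 0), f) if and only if b = b′. -/

import Mathlib

namespace Div2Machine

/-- The four states of the machine `div2`. -/
inductive St | s | q₁ | q₂ | f

/-- Configurations of `div2`. -/
abbrev Cfg := (ℤ × ℤ) × St

/-- The basic steps of `div2`. -/
def Step0 (P Q : Cfg) : Prop :=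
  (∃ b d : ℤ, d = 0 ∧ P = ((b, d), St.s) ∧ Q = ((b, d), St.q₁)) ∨
  (∃ b d : ℤ, P = ((b, d), St.q₁) ∧ Q = ((b - 2, d + 1), St.q₁)) ∨
  (∃ b d : ℤ, b = 0 ∧ P = ((b, d), St.q₁) ∧ Q = ((b, d), St.q₂)) ∨
  (∃ b d : ℤ, b = -1 ∧ P = ((b, d), St.q₁) ∧ Q = ((b + 1, d), St.q₂)) ∨
  (∃ b d : ℤ, P = ((b, d), St.q₂) ∧ Q = ((b + 1, d - 1), St.q₂)) ∨
  (∃ b d : ℤ, d = 0 ∧ P = ((b, d), St.q₂) ∧ Q = ((b, d), St.f))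

/-- The one-step relation: the symmetric closure of the basic steps. -/
def Step (P Q : Cfg) : Prop := Step0 P Q ∨ Step0 Q P

/-- The reachability relation of `div2`. -/
def Reach : Cfg → Cfg → Prop := Relation.ReflTransGen Step

/-- An invariant of the machine. -/
def inv : Cfg → ℤ
  | ((b, d), St.s) => (b + 2 * d + 1) / 2
  | ((b, d), St.q₁) => (b + 2 * d + 1) / 2
  | ((b, d), St.q₂) => b + d
  | ((b, d), St.f) => b + d

lemma inv_step0 {P Q : Cfg} (h : Step0 P Q) : inv P = inv Q := by
  rcases h with ⟨b, d, hd, rfl, rfl⟩ | ⟨b, d, rfl, rfl⟩ | ⟨b, d, hb, rfl, rfl⟩ |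
    ⟨b, d, hb, rfl, rfl⟩ | ⟨b, d, rfl, rfl⟩ | ⟨b, d, hd, rfl, rfl⟩ <;>
    simp [inv] <;> omega

lemma inv_reach {P Q : Cfg} (h : Reach P Q) : inv P = inv Q := by
  induction h with
  | refl => rfl
  | tail _ h ih =>
      rcases h with h | h
      · exact ih.trans (inv_step0 h)
      · exact ih.trans (inv_step0 h).symm

lemma step_reach {P Q : Cfg} (h : Step P Q) : Reach P Q :=
  Relation.ReflTransGen.single h

lemma step_symm {P Q : Cfg} (h : Step P Q) : Step Q P := h.elim Or.inr Or.inl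

/-- Moves in state q₁. -/
lemma reach_q1 (b d : ℤ) : ∀ k : ℤ, Reach ((b, d), St.q₁) ((b - 2 * k, d + k), St.q₁) := by
  intro k
  induction k using Int.induction_on with
  | zero => simp only [mul_zero, sub_zero, add_zero]; exact Relation.ReflTransGen.refl
  | succ n ih =>
      refine ih.tail (Or.inl (Or.inr (Or.inl ⟨b - 2 * n, d + n, rfl, ?_⟩)))
      simp only [Prod.mk.injEq, and_true]
      constructor <;> ring
  | pred n ih =>
      refine ih.tail (Or.inr (Or.inr (Or.inl ⟨b - 2 * (-n - 1), d + (-n - 1), rfl, ?_⟩)))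
      simp only [Prod.mk.injEq, and_true]
      constructor <;> ring

/-- Moves in state q₂. -/
lemma reach_q2 (b d : ℤ) : ∀ k : ℤ, Reach ((b, d), St.q₂) ((b + k, d - k), St.q₂) := by
  intro k
  induction k using Int.induction_on with
  | zero => simp only [mul_zero, sub_zero, add_zero]; exact Relation.ReflTransGen.refl
  | succ n ih =>
      refine ih.tail (Or.inl (Or.inr (Or.inr (Or.inr (Or.inr (Or.inl
        ⟨b + n, d - n, rfl, ?_⟩))))))
      simp only [Prod.mk.injEq, and_true]
      constructor <;> ring
  | pred n ih =>
      refine ih.tail (Or.inr (Or.inr (Or.inr (Or.inr (Or.inr (Or.inl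
        ⟨b + (-n - 1), d - (-n - 1), rfl, ?_⟩))))))
      simp only [Prod.mk.injEq, and_true]
      constructor <;> ring

/-- From the start state, reach q₂ at `(0, j)` where `b = 2j - α`, `α ∈ {0,1}`. -/
lemma reach_mid (j α : ℤ) (hα : α = 0 ∨ α = 1) :
    Reach ((2 * j - α, 0), St.s) (((0 : ℤ), j), St.q₂) := by
  have h1 : Step ((2 * j - α, 0), St.s) ((2 * j - α, 0), St.q₁) :=
    Or.inl (Or.inl ⟨2 * j - α, 0, rfl, rfl, rfl⟩)
  have h2 : Reach ((2 * j - α, 0), St.q₁) ((-α, j), St.q₁) := by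
    have := reach_q1 (2 * j - α) 0 j
    have e : ((2 * j - α - 2 * j, 0 + j), St.q₁) = (((-α : ℤ), j), St.q₁) := by
      simp only [Prod.mk.injEq, and_true]; constructor <;> ring
    exact e ▸ this
  have h3 : Step ((-α, j), St.q₁) (((0 : ℤ), j), St.q₂) := by
    rcases hα with rfl | rfl
    · exact Or.inl (Or.inr (Or.inr (Or.inl ⟨0, j, rfl, by norm_num, by norm_num⟩)))
    · refine Or.inl (Or.inr (Or.inr (Or.inr (Or.inl ⟨-1, j, rfl, by norm_num, ?_⟩))))
      norm_num
  exact ((step_reach h1).trans h2).tail h3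

/-- The input-output description of `div2`. -/
theorem div2_io :
    (∀ b b' : ℤ, Reach ((b, 0), St.s) ((b', 0), St.s) ↔
      ∃ j α β : ℤ, (α = 0 ∨ α = 1) ∧ (β = 0 ∨ β = 1) ∧ b = 2 * j - α ∧ b' = 2 * j - β) ∧
    (∀ b b' : ℤ, Reach ((b, 0), St.s) ((b', 0), St.f) ↔ (b = 2 * b' ∨ b = 2 * b' - 1)) ∧
    (∀ b b' : ℤ, Reach ((b, 0), St.f) ((b', 0), St.f) ↔ b = b') := by
  refine ⟨fun b b' => ⟨fun h => ?_, fun ⟨j, α, β, hα, hβ, hb, hb'⟩ => ?_⟩,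
    fun b b' => ⟨fun h => ?_, fun h => ?_⟩, fun b b' => ⟨fun h => ?_, fun h => ?_⟩⟩
  · -- (i) forward
    have := inv_reach h
    simp only [inv] at this
    refine ⟨(b + 1) / 2, 2 * ((b + 1) / 2) - b, 2 * ((b + 1) / 2) - b', ?_, ?_, by ring, ?_⟩
    · omega
    · omega
    · omega
  · -- (i) backward
    subst hb hb'
    have h1 := reach_mid j α hα
    have h2 := reach_mid j β hβ
    exact h1.trans ((@Relation.ReflTransGen.stdSymm _ Step ⟨fun _ _ => step_symm⟩).symm _ _ h2)
  · -- (ii) forward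
    have := inv_reach h
    simp only [inv] at this
    omega
  · -- (ii) backward
    have hb : b = 2 * b' - (2 * b' - b) := by ring
    have h1 : Reach ((b, 0), St.s) (((0 : ℤ), b'), St.q₂) := by
      rw [hb]; exact reach_mid b' (2 * b' - b) (by omega)
    have h2 : Reach (((0 : ℤ), b'), St.q₂) ((b', 0), St.q₂) := by
      have := reach_q2 0 b' b'
      have e : (((0 : ℤ) + b', b' - b'), St.q₂) = ((b', (0 : ℤ)), St.q₂) := by
        simp
      exact e ▸ this
    have h3 : Step ((b', (0 : ℤ)), St.q₂) ((b', 0), St.f) :=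
      Or.inl (Or.inr (Or.inr (Or.inr (Or.inr (Or.inr ⟨b', 0, rfl, rfl, rfl⟩)))))
    exact (h1.trans h2).tail h3
  · -- (iii) forward
    have := inv_reach h
    simp only [inv] at this
    omega
  · -- (iii) backward
    subst h
    exact Relation.ReflTransGen.refl

end Div2Machine
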